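/- Let Y be a finite set of vectors in ℝⁿ with bᵀy = −1 for each element's associated y, and define C_d(t) = dᵀx(t) for d = |Aᵀy|. Along any solution of the continuous undirected Physarum dynamics ẋ = |q| − x (with Aq = b), one has Ċ_d ≥ 1 − C_d; consequently C_d(t) ≥ 1 + (C_d(t₀) − 1)·e^{−(t − t₀)} for t ≥ t₀, and in particular if C_d(t₀) ≥ 1 then C_d(t) ≥ 1 for all t ≥ t₀. -/

import Mathlib

/-- Along the continuous undirected Physarum dynamics ẋ = |q| − x, for any y
with bᵀy = −1 and d = |Aᵀy|, the quantity C_d(t) = dᵀx(t) satisfies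
Ċ_d ≥ 1 − C_d, the Grönwall consequence
C_d(t) ≥ 1 + (C_d(t₀) − 1)e^{−(t−t₀)}, and forward invariance of C_d ≥ 1. -/
theorem dominating_states_invariant {n m : ℕ} (A : Matrix (Fin n) (Fin m) ℝ)
    (b : Fin n → ℝ) (x q : ℝ → Fin m → ℝ)
    (hq : ∀ t, A.mulVec (q t) = b)
    (hdyn : ∀ (e : Fin m) (t : ℝ),
      HasDerivAt (fun s => x s e) (|q t e| - x t e) t)
    (y : Fin n → ℝ) (hy : (∑ i, b i * y i) = -1) :
    (∀ t : ℝ, 1 - (∑ e, |Matrix.vecMul y A e| * x t e) ≤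
      deriv (fun s => ∑ e, |Matrix.vecMul y A e| * x s e) t) ∧
    (∀ t₀ t : ℝ, t₀ ≤ t →
      1 + ((∑ e, |Matrix.vecMul y A e| * x t₀ e) - 1) * Real.exp (-(t - t₀)) ≤
        ∑ e, |Matrix.vecMul y A e| * x t e) ∧
    (∀ t₀ : ℝ, 1 ≤ (∑ e, |Matrix.vecMul y A e| * x t₀ e) →
      ∀ t, t₀ ≤ t → 1 ≤ ∑ e, |Matrix.vecMul y A e| * x t e) := by
  set d : Fin m → ℝ := fun e => |Matrix.vecMul y A e| with hd
  set C : ℝ → ℝ := fun t => ∑ e, d e * x t e with hC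
  -- derivative of C
  have hCdiff : ∀ t, HasDerivAt C (∑ e, d e * (|q t e| - x t e)) t := by
    intro t
    exact HasDerivAt.fun_sum (fun e _ => (hdyn e t).const_mul (d e))
  -- key inequality : ∑ d e * |q t e| ≥ 1
  have hkey : ∀ t, 1 ≤ ∑ e, d e * |q t e| := by
    intro t
    have h1 : ∑ e, Matrix.vecMul y A e * q t e = -1 := by
      have h0 := Matrix.dotProduct_mulVec y A (q t)
      have h2 : dotProduct y (A.mulVec (q t)) = -1 := by
        rw [hq t]
        simpa [dotProduct, mul_comm] using hy
      rw [h0] at h2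
      simpa [dotProduct] using h2
    calc (1 : ℝ) = |∑ e, Matrix.vecMul y A e * q t e| := by rw [h1]; norm_num
      _ ≤ ∑ e, |Matrix.vecMul y A e * q t e| := Finset.abs_sum_le_sum_abs _ _
      _ = ∑ e, d e * |q t e| := by simp [hd, abs_mul]
  -- derivative bound
  have hderge : ∀ t, 1 - C t ≤ ∑ e, d e * (|q t e| - x t e) := by
    intro t
    have : ∑ e, d e * (|q t e| - x t e) = (∑ e, d e * |q t e|) - C t := by
      simp [hC, mul_sub, Finset.sum_sub_distrib]
    rw [this]
    linarith [hkey t]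
  have hfst : ∀ t : ℝ, 1 - C t ≤ deriv C t := by
    intro t
    rw [(hCdiff t).deriv]
    exact hderge t
  -- Grönwall
  have hgron : ∀ t₀ t : ℝ, t₀ ≤ t →
      1 + (C t₀ - 1) * Real.exp (-(t - t₀)) ≤ C t := by
    intro t₀ t ht
    set g : ℝ → ℝ := fun s => (C s - 1) * Real.exp s with hg
    have hgderiv : ∀ s, HasDerivAt g
        ((∑ e, d e * (|q s e| - x s e)) * Real.exp s + (C s - 1) * Real.exp s) s := by
      intro s
      exact ((hCdiff s).sub_const 1).mul (Real.hasDerivAt_exp s)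
    have hmono : Monotone g := by
      apply monotone_of_deriv_nonneg (fun s => (hgderiv s).differentiableAt)
      intro s
      rw [(hgderiv s).deriv]
      have h1 := hderge s
      have h2 := Real.exp_pos s
      nlinarith
    have := hmono ht
    have hexp : Real.exp t > 0 := Real.exp_pos t
    have h3 : (C t₀ - 1) * Real.exp t₀ ≤ (C t - 1) * Real.exp t := this
    have h4 : Real.exp (-(t - t₀)) = Real.exp t₀ / Real.exp t := by
      rw [Real.exp_neg, Real.exp_sub]
      field_simp
    rw [h4]
    have h6 : (C t₀ - 1) * (Real.exp t₀ / Real.exp t) * Real.exp t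
        = (C t₀ - 1) * Real.exp t₀ := by field_simp
    nlinarith [h3, hexp, h6]
  have hCeq : ∀ t, (∑ e, |Matrix.vecMul y A e| * x t e) = C t := fun t => rfl
  refine ⟨?_, ?_, ?_⟩
  · intro t; rw [hCeq t]; exact hfst t
  · intro t₀ t ht; rw [hCeq t₀, hCeq t]; exact hgron t₀ t ht
  · intro t₀ h1 t ht
    rw [hCeq] at h1 ⊢
    have := hgron t₀ t ht
    have hexp : 0 < Real.exp (-(t - t₀)) := Real.exp_pos _
    nlinarith
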